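/- Define T : ℝ^{[n]×S×Aⁿ} × Σ₁ → ℝ^{[n]×S×Aⁿ} by T(v,σ₁)_{i,s₁,p₀} := max_{τ₁^i ∈ Σ₁^i} V₁(σ₁, τ₁^i, v)_{i,s₁,p₀}. Then for every v ∈ ℝ^{[n]×S×Aⁿ}, the map σ₁ ↦ T(v,σ₁) is continuous on Σ₁ (with the supremum metric); and for every bounded subset B ⊂ ℝ^{[n]×S×Aⁿ}, the family of maps {σ₁ ↦ T(v,σ₁)}_{v ∈ B} is equicontinuous on Σ₁. -/

import Mathlib

open Finset

/-- A one-memory policy for a single firm. -/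
def IsPolicy {ι S A : Type*} [Fintype A]
    (τ : (ι → A) → S → A → ℝ) : Prop :=
  (∀ p₀ s₁ a, 0 ≤ τ p₀ s₁ a) ∧ ∀ p₀ s₁, ∑ a, τ p₀ s₁ a = 1

/-- A transition kernel on states. -/
def IsKernel {ι S A : Type*} [Fintype S]
    (P : (ι → A) → S → S → ℝ) : Prop :=
  (∀ p s s', 0 ≤ P p s s') ∧ ∀ p s, ∑ s', P p s s' = 1

/-- The one-step value operator `V₁`. -/
def V1 {ι S A : Type*} [Fintype ι] [DecidableEq ι] [Fintype S] [Fintype A]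
    (P : (ι → A) → S → S → ℝ) (π : ι → (ι → A) → S → ℝ) (δ : ι → ℝ)
    (σ : ι → (ι → A) → S → A → ℝ) (τ : (ι → A) → S → A → ℝ)
    (v : ι → S → (ι → A) → ℝ) (i : ι) (s₁ : S) (p₀ : ι → A) : ℝ :=
  ∑ p₁ : ι → A,
    (τ p₀ s₁ (p₁ i) * ∏ j ∈ Finset.univ.erase i, σ j p₀ s₁ (p₁ j)) *
      (π i p₁ s₁ + δ i * ∑ s₂, P p₁ s₁ s₂ * v i s₂ p₁)

/-- The operator `T(v,σ)`. -/
noncomputable def Tmap {ι S A : Type*} [Fintype ι] [DecidableEq ι] [Fintype S] [Fintype A]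
    (P : (ι → A) → S → S → ℝ) (π : ι → (ι → A) → S → ℝ) (δ : ι → ℝ)
    (v : ι → S → (ι → A) → ℝ) (σ : ι → (ι → A) → S → A → ℝ) :
    ι → S → (ι → A) → ℝ :=
  fun i s₁ p₀ => sSup ((fun τ => V1 P π δ σ τ v i s₁ p₀) '' {τ | IsPolicy τ})

/-- Product difference bound for [0,1]-valued factors. -/
lemma prod_sub_prod_abs_le {ι : Type*} (t : Finset ι) (f g : ι → ℝ)
    (hf0 : ∀ j ∈ t, 0 ≤ f j) (hf1 : ∀ j ∈ t, f j ≤ 1)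
    (hg0 : ∀ j ∈ t, 0 ≤ g j) (hg1 : ∀ j ∈ t, g j ≤ 1) :
    |∏ j ∈ t, f j - ∏ j ∈ t, g j| ≤ ∑ j ∈ t, |f j - g j| := by
  induction t using Finset.cons_induction with
  | empty => simp
  | cons a s ha ih =>
    simp only [Finset.prod_cons, Finset.sum_cons]
    have hfs0 : (0:ℝ) ≤ ∏ j ∈ s, f j :=
      Finset.prod_nonneg fun j hj => hf0 j (Finset.mem_cons_of_mem hj)
    have hfs1 : (∏ j ∈ s, f j) ≤ 1 :=
      Finset.prod_le_one (fun j hj => hf0 j (Finset.mem_cons_of_mem hj))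
        (fun j hj => hf1 j (Finset.mem_cons_of_mem hj))
    have hga0 : 0 ≤ g a := hg0 a (Finset.mem_cons_self a s)
    have hga1 : g a ≤ 1 := hg1 a (Finset.mem_cons_self a s)
    have key : f a * ∏ j ∈ s, f j - g a * ∏ j ∈ s, g j
        = (f a - g a) * ∏ j ∈ s, f j + g a * (∏ j ∈ s, f j - ∏ j ∈ s, g j) := by ring
    rw [key]
    calc |(f a - g a) * ∏ j ∈ s, f j + g a * (∏ j ∈ s, f j - ∏ j ∈ s, g j)|
        ≤ |(f a - g a) * ∏ j ∈ s, f j| + |g a * (∏ j ∈ s, f j - ∏ j ∈ s, g j)| := abs_add_le _ _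
      _ = |f a - g a| * |∏ j ∈ s, f j| + |g a| * |∏ j ∈ s, f j - ∏ j ∈ s, g j| := by
          rw [abs_mul, abs_mul]
      _ ≤ |f a - g a| * 1 + 1 * (∑ j ∈ s, |f j - g j|) := by
          gcongr
          · rw [abs_of_nonneg hfs0]; exact hfs1
          · rw [abs_of_nonneg hga0]; exact hga1
          · exact ih (fun j hj => hf0 j (Finset.mem_cons_of_mem hj))
              (fun j hj => hf1 j (Finset.mem_cons_of_mem hj))
              (fun j hj => hg0 j (Finset.mem_cons_of_mem hj))
              (fun j hj => hg1 j (Finset.mem_cons_of_mem hj))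
      _ = |f a - g a| + ∑ j ∈ s, |f j - g j| := by ring

lemma abs_csSup_image_sub_le {X : Type*} {s : Set X} (hs : s.Nonempty) {f g : X → ℝ} {c : ℝ}
    (hf : BddAbove (f '' s)) (hg : BddAbove (g '' s))
    (h : ∀ x ∈ s, |f x - g x| ≤ c) :
    |sSup (f '' s) - sSup (g '' s)| ≤ c := by
  have key : ∀ (f g : X → ℝ), BddAbove (g '' s) → (∀ x ∈ s, |f x - g x| ≤ c) →
      sSup (f '' s) - sSup (g '' s) ≤ c := by
    intro f g hg h
    rw [sub_le_iff_le_add]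
    apply csSup_le (hs.image f)
    rintro _ ⟨x, hx, rfl⟩
    have h1 : f x - g x ≤ c := (abs_le.1 (h x hx)).2
    have h2 : g x ≤ sSup (g '' s) := le_csSup hg (Set.mem_image_of_mem g hx)
    linarith
  rw [abs_sub_le_iff]
  exact ⟨key f g hg h, key g f hf fun x hx => by rw [abs_sub_comm]; exact h x hx⟩

set_option linter.unusedSectionVars false
section Main

variable {ι S A : Type*} [Fintype ι] [DecidableEq ι] [Nonempty ι]
    [Fintype S] [DecidableEq S] [Nonempty S]
    [Fintype A] [DecidableEq A] [Nonempty A]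
    (P : (ι → A) → S → S → ℝ)
    (π : ι → (ι → A) → S → ℝ) (δ : ι → ℝ)

lemma IsPolicy.le_one {τ : (ι → A) → S → A → ℝ} (hτ : IsPolicy τ)
    (p₀ : ι → A) (s₁ : S) (a : A) : τ p₀ s₁ a ≤ 1 := by
  rw [← hτ.2 p₀ s₁]
  exact Finset.single_le_sum (fun b _ => hτ.1 p₀ s₁ b) (Finset.mem_univ a)

lemma payoff_abs_le (hP : IsKernel P) (hδ : ∀ i, 0 < δ i ∧ δ i < 1)
    (v : ι → S → (ι → A) → ℝ) (i : ι) (s₁ : S) (p₁ : ι → A) :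
    |π i p₁ s₁ + δ i * ∑ s₂, P p₁ s₁ s₂ * v i s₂ p₁| ≤ ‖π‖ + ‖v‖ := by
  have hπ : |π i p₁ s₁| ≤ ‖π‖ := by
    calc |π i p₁ s₁| = ‖π i p₁ s₁‖ := rfl
      _ ≤ ‖π i p₁‖ := norm_le_pi_norm (π i p₁) s₁
      _ ≤ ‖π i‖ := norm_le_pi_norm (π i) p₁
      _ ≤ ‖π‖ := norm_le_pi_norm π i
  have hv : ∀ s₂, |v i s₂ p₁| ≤ ‖v‖ := fun s₂ => by
    calc |v i s₂ p₁| = ‖v i s₂ p₁‖ := rfl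
      _ ≤ ‖v i s₂‖ := norm_le_pi_norm (v i s₂) p₁
      _ ≤ ‖v i‖ := norm_le_pi_norm (v i) s₂
      _ ≤ ‖v‖ := norm_le_pi_norm v i
  have hsum : |∑ s₂, P p₁ s₁ s₂ * v i s₂ p₁| ≤ ‖v‖ := by
    calc |∑ s₂, P p₁ s₁ s₂ * v i s₂ p₁| ≤ ∑ s₂, |P p₁ s₁ s₂ * v i s₂ p₁| :=
          Finset.abs_sum_le_sum_abs _ _
      _ = ∑ s₂, P p₁ s₁ s₂ * |v i s₂ p₁| := by
          refine Finset.sum_congr rfl fun s₂ _ => ?_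
          rw [abs_mul, abs_of_nonneg (hP.1 p₁ s₁ s₂)]
      _ ≤ ∑ s₂, P p₁ s₁ s₂ * ‖v‖ := by
          refine Finset.sum_le_sum fun s₂ _ => ?_
          exact mul_le_mul_of_nonneg_left (hv s₂) (hP.1 p₁ s₁ s₂)
      _ = ‖v‖ := by rw [← Finset.sum_mul, hP.2 p₁ s₁, one_mul]
  have hδ1 : |δ i| ≤ 1 := by
    rw [abs_of_nonneg (hδ i).1.le]; exact (hδ i).2.le
  calc |π i p₁ s₁ + δ i * ∑ s₂, P p₁ s₁ s₂ * v i s₂ p₁|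
      ≤ |π i p₁ s₁| + |δ i * ∑ s₂, P p₁ s₁ s₂ * v i s₂ p₁| := abs_add_le _ _
    _ ≤ ‖π‖ + 1 * ‖v‖ := by
        refine add_le_add hπ ?_
        rw [abs_mul]
        exact mul_le_mul hδ1 hsum (abs_nonneg _) zero_le_one
    _ = ‖π‖ + ‖v‖ := by ring

lemma V1_abs_le (hP : IsKernel P) (hδ : ∀ i, 0 < δ i ∧ δ i < 1)
    {σ : ι → (ι → A) → S → A → ℝ} (hσ : ∀ j, IsPolicy (σ j))
    {τ : (ι → A) → S → A → ℝ} (hτ : IsPolicy τ)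
    (v : ι → S → (ι → A) → ℝ) (i : ι) (s₁ : S) (p₀ : ι → A) :
    |V1 P π δ σ τ v i s₁ p₀| ≤ (Fintype.card (ι → A) : ℝ) * (‖π‖ + ‖v‖) := by
  unfold V1
  calc |∑ p₁ : ι → A, (τ p₀ s₁ (p₁ i) * ∏ j ∈ Finset.univ.erase i, σ j p₀ s₁ (p₁ j)) *
      (π i p₁ s₁ + δ i * ∑ s₂, P p₁ s₁ s₂ * v i s₂ p₁)|
      ≤ ∑ p₁ : ι → A, |(τ p₀ s₁ (p₁ i) * ∏ j ∈ Finset.univ.erase i, σ j p₀ s₁ (p₁ j)) *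
          (π i p₁ s₁ + δ i * ∑ s₂, P p₁ s₁ s₂ * v i s₂ p₁)| := Finset.abs_sum_le_sum_abs _ _
    _ ≤ ∑ _p₁ : ι → A, 1 * (‖π‖ + ‖v‖) := by
        refine Finset.sum_le_sum fun p₁ _ => ?_
        rw [abs_mul]
        refine mul_le_mul ?_ (payoff_abs_le P π δ hP hδ v i s₁ p₁) (abs_nonneg _) zero_le_one
        rw [abs_mul]
        have h1 : |τ p₀ s₁ (p₁ i)| ≤ 1 := by
          rw [abs_of_nonneg (hτ.1 p₀ s₁ (p₁ i))]; exact hτ.le_one p₀ s₁ (p₁ i)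
        have h2 : |∏ j ∈ Finset.univ.erase i, σ j p₀ s₁ (p₁ j)| ≤ 1 := by
          rw [abs_of_nonneg (Finset.prod_nonneg fun j _ => (hσ j).1 p₀ s₁ (p₁ j))]
          exact Finset.prod_le_one (fun j _ => (hσ j).1 p₀ s₁ (p₁ j))
            (fun j _ => (hσ j).le_one p₀ s₁ (p₁ j))
        calc |τ p₀ s₁ (p₁ i)| * |∏ j ∈ Finset.univ.erase i, σ j p₀ s₁ (p₁ j)|
            ≤ 1 * 1 := mul_le_mul h1 h2 (abs_nonneg _) zero_le_one
          _ = 1 := one_mul 1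
    _ = (Fintype.card (ι → A) : ℝ) * (‖π‖ + ‖v‖) := by
        rw [Finset.sum_const, Finset.card_univ, nsmul_eq_mul, one_mul]

lemma V1_sub_abs_le (hP : IsKernel P) (hδ : ∀ i, 0 < δ i ∧ δ i < 1)
    {σ σ' : ι → (ι → A) → S → A → ℝ} (hσ : ∀ j, IsPolicy (σ j)) (hσ' : ∀ j, IsPolicy (σ' j))
    {τ : (ι → A) → S → A → ℝ} (hτ : IsPolicy τ)
    (v : ι → S → (ι → A) → ℝ) (i : ι) (s₁ : S) (p₀ : ι → A) :
    |V1 P π δ σ τ v i s₁ p₀ - V1 P π δ σ' τ v i s₁ p₀| ≤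
      (Fintype.card (ι → A) : ℝ) * (Fintype.card ι : ℝ) * (‖π‖ + ‖v‖) * dist σ σ' := by
  have hd : ∀ (j : ι) (p₀' : ι → A) (s : S) (a : A),
      |σ j p₀' s a - σ' j p₀' s a| ≤ dist σ σ' := by
    intro j p₀' s a
    calc |σ j p₀' s a - σ' j p₀' s a| = dist (σ j p₀' s a) (σ' j p₀' s a) := (Real.dist_eq _ _).symm
      _ ≤ dist (σ j p₀' s) (σ' j p₀' s) := dist_le_pi_dist _ _ a
      _ ≤ dist (σ j p₀') (σ' j p₀') := dist_le_pi_dist _ _ s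
      _ ≤ dist (σ j) (σ' j) := dist_le_pi_dist _ _ p₀'
      _ ≤ dist σ σ' := dist_le_pi_dist _ _ j
  unfold V1
  rw [← Finset.sum_sub_distrib]
  calc |∑ p₁ : ι → A, ((τ p₀ s₁ (p₁ i) * ∏ j ∈ Finset.univ.erase i, σ j p₀ s₁ (p₁ j)) *
        (π i p₁ s₁ + δ i * ∑ s₂, P p₁ s₁ s₂ * v i s₂ p₁) -
        (τ p₀ s₁ (p₁ i) * ∏ j ∈ Finset.univ.erase i, σ' j p₀ s₁ (p₁ j)) *
        (π i p₁ s₁ + δ i * ∑ s₂, P p₁ s₁ s₂ * v i s₂ p₁))|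
      ≤ ∑ p₁ : ι → A, |(τ p₀ s₁ (p₁ i) * ∏ j ∈ Finset.univ.erase i, σ j p₀ s₁ (p₁ j)) *
        (π i p₁ s₁ + δ i * ∑ s₂, P p₁ s₁ s₂ * v i s₂ p₁) -
        (τ p₀ s₁ (p₁ i) * ∏ j ∈ Finset.univ.erase i, σ' j p₀ s₁ (p₁ j)) *
        (π i p₁ s₁ + δ i * ∑ s₂, P p₁ s₁ s₂ * v i s₂ p₁)| := Finset.abs_sum_le_sum_abs _ _
    _ ≤ ∑ _p₁ : ι → A, (Fintype.card ι : ℝ) * (‖π‖ + ‖v‖) * dist σ σ' := by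
        refine Finset.sum_le_sum fun p₁ _ => ?_
        have hfac : (τ p₀ s₁ (p₁ i) * ∏ j ∈ Finset.univ.erase i, σ j p₀ s₁ (p₁ j)) *
            (π i p₁ s₁ + δ i * ∑ s₂, P p₁ s₁ s₂ * v i s₂ p₁) -
            (τ p₀ s₁ (p₁ i) * ∏ j ∈ Finset.univ.erase i, σ' j p₀ s₁ (p₁ j)) *
            (π i p₁ s₁ + δ i * ∑ s₂, P p₁ s₁ s₂ * v i s₂ p₁)
            = τ p₀ s₁ (p₁ i) *
              ((∏ j ∈ Finset.univ.erase i, σ j p₀ s₁ (p₁ j)) -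
               (∏ j ∈ Finset.univ.erase i, σ' j p₀ s₁ (p₁ j))) *
              (π i p₁ s₁ + δ i * ∑ s₂, P p₁ s₁ s₂ * v i s₂ p₁) := by ring
        rw [hfac, abs_mul, abs_mul]
        have hτ1 : |τ p₀ s₁ (p₁ i)| ≤ 1 := by
          rw [abs_of_nonneg (hτ.1 p₀ s₁ (p₁ i))]; exact hτ.le_one p₀ s₁ (p₁ i)
        have hprod : |(∏ j ∈ Finset.univ.erase i, σ j p₀ s₁ (p₁ j)) -
            (∏ j ∈ Finset.univ.erase i, σ' j p₀ s₁ (p₁ j))| ≤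
            (Fintype.card ι : ℝ) * dist σ σ' := by
          calc |(∏ j ∈ Finset.univ.erase i, σ j p₀ s₁ (p₁ j)) -
              (∏ j ∈ Finset.univ.erase i, σ' j p₀ s₁ (p₁ j))|
              ≤ ∑ j ∈ Finset.univ.erase i, |σ j p₀ s₁ (p₁ j) - σ' j p₀ s₁ (p₁ j)| :=
                prod_sub_prod_abs_le _ _ _
                  (fun j _ => (hσ j).1 p₀ s₁ (p₁ j)) (fun j _ => (hσ j).le_one p₀ s₁ (p₁ j))
                  (fun j _ => (hσ' j).1 p₀ s₁ (p₁ j)) (fun j _ => (hσ' j).le_one p₀ s₁ (p₁ j))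
            _ ≤ ∑ _j ∈ Finset.univ.erase i, dist σ σ' :=
                Finset.sum_le_sum fun j _ => hd j p₀ s₁ (p₁ j)
            _ = ((Finset.univ.erase i).card : ℝ) * dist σ σ' := by
                rw [Finset.sum_const, nsmul_eq_mul]
            _ ≤ (Fintype.card ι : ℝ) * dist σ σ' := by
                refine mul_le_mul_of_nonneg_right ?_ dist_nonneg
                exact_mod_cast Finset.card_le_card (Finset.erase_subset i Finset.univ) |>.trans
                  (le_of_eq Finset.card_univ)
        calc |τ p₀ s₁ (p₁ i)| *
              |(∏ j ∈ Finset.univ.erase i, σ j p₀ s₁ (p₁ j)) -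
               (∏ j ∈ Finset.univ.erase i, σ' j p₀ s₁ (p₁ j))| *
              |π i p₁ s₁ + δ i * ∑ s₂, P p₁ s₁ s₂ * v i s₂ p₁|
            ≤ 1 * ((Fintype.card ι : ℝ) * dist σ σ') * (‖π‖ + ‖v‖) := by
              refine mul_le_mul (mul_le_mul hτ1 hprod (abs_nonneg _) zero_le_one)
                (payoff_abs_le P π δ hP hδ v i s₁ p₁) (abs_nonneg _) ?_
              positivity
          _ = (Fintype.card ι : ℝ) * (‖π‖ + ‖v‖) * dist σ σ' := by ring
    _ = (Fintype.card (ι → A) : ℝ) * (Fintype.card ι : ℝ) * (‖π‖ + ‖v‖) * dist σ σ' := by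
        rw [Finset.sum_const, Finset.card_univ, nsmul_eq_mul]; ring

lemma policy_nonempty : Set.Nonempty {τ : (ι → A) → S → A → ℝ | IsPolicy τ} := by
  obtain ⟨a₀⟩ := ‹Nonempty A›
  refine ⟨fun _ _ a => if a = a₀ then 1 else 0, ?_, ?_⟩
  · intro p₀ s₁ a; dsimp only; split <;> norm_num
  · intro p₀ s₁; simp

lemma Tmap_sub_abs_le (hP : IsKernel P) (hδ : ∀ i, 0 < δ i ∧ δ i < 1)
    {σ σ' : ι → (ι → A) → S → A → ℝ} (hσ : ∀ j, IsPolicy (σ j)) (hσ' : ∀ j, IsPolicy (σ' j))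
    (v : ι → S → (ι → A) → ℝ) (i : ι) (s₁ : S) (p₀ : ι → A) :
    |Tmap P π δ v σ i s₁ p₀ - Tmap P π δ v σ' i s₁ p₀| ≤
      (Fintype.card (ι → A) : ℝ) * (Fintype.card ι : ℝ) * (‖π‖ + ‖v‖) * dist σ σ' := by
  unfold Tmap
  refine abs_csSup_image_sub_le policy_nonempty ?_ ?_ ?_
  · exact ⟨(Fintype.card (ι → A) : ℝ) * (‖π‖ + ‖v‖), by
      rintro _ ⟨τ, hτ, rfl⟩
      exact (abs_le.1 (V1_abs_le P π δ hP hδ hσ hτ v i s₁ p₀)).2⟩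
  · exact ⟨(Fintype.card (ι → A) : ℝ) * (‖π‖ + ‖v‖), by
      rintro _ ⟨τ, hτ, rfl⟩
      exact (abs_le.1 (V1_abs_le P π δ hP hδ hσ' hτ v i s₁ p₀)).2⟩
  · intro τ hτ
    exact V1_sub_abs_le P π δ hP hδ hσ hσ' hτ v i s₁ p₀

lemma Tmap_dist_le (hP : IsKernel P) (hδ : ∀ i, 0 < δ i ∧ δ i < 1)
    {σ σ' : ι → (ι → A) → S → A → ℝ} (hσ : ∀ j, IsPolicy (σ j)) (hσ' : ∀ j, IsPolicy (σ' j))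
    (v : ι → S → (ι → A) → ℝ) :
    dist (Tmap P π δ v σ) (Tmap P π δ v σ') ≤
      (Fintype.card (ι → A) : ℝ) * (Fintype.card ι : ℝ) * (‖π‖ + ‖v‖) * dist σ σ' := by
  have hnn : (0:ℝ) ≤ (Fintype.card (ι → A) : ℝ) * (Fintype.card ι : ℝ) * (‖π‖ + ‖v‖) *
      dist σ σ' := by positivity
  rw [dist_pi_le_iff hnn]
  intro i
  rw [dist_pi_le_iff hnn]
  intro s₁
  rw [dist_pi_le_iff hnn]
  intro p₀
  rw [Real.dist_eq]
  exact Tmap_sub_abs_le P π δ hP hδ hσ hσ' v i s₁ p₀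

end Main

/-- for every `v`, the map `σ ↦ T(v,σ)` is continuous on `Σ₁`, and for
every bounded set `B` of payoff vectors, the family `{σ ↦ T(v,σ)}_{v ∈ B}` is
equicontinuous on `Σ₁`. -/
theorem Tmap_continuous_and_equicontinuous
    {ι S A : Type*} [Fintype ι] [DecidableEq ι] [Nonempty ι]
    [Fintype S] [DecidableEq S] [Nonempty S]
    [Fintype A] [DecidableEq A] [Nonempty A]
    (P : (ι → A) → S → S → ℝ) (hP : IsKernel P)
    (π : ι → (ι → A) → S → ℝ)
    (δ : ι → ℝ) (hδ : ∀ i, 0 < δ i ∧ δ i < 1) :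
    (∀ v : ι → S → (ι → A) → ℝ,
      ContinuousOn (fun σ : ι → (ι → A) → S → A → ℝ => Tmap P π δ v σ)
        {σ | ∀ j, IsPolicy (σ j)}) ∧
    (∀ B : Set (ι → S → (ι → A) → ℝ), Bornology.IsBounded B →
      EquicontinuousOn
        (fun (v : B) (σ : ι → (ι → A) → S → A → ℝ) => Tmap P π δ v.1 σ)
        {σ | ∀ j, IsPolicy (σ j)}) := by
  constructor
  · intro v
    set L : ℝ := (Fintype.card (ι → A) : ℝ) * (Fintype.card ι : ℝ) * (‖π‖ + ‖v‖) with hL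
    have hL0 : 0 ≤ L := by positivity
    have : LipschitzOnWith L.toNNReal (fun σ : ι → (ι → A) → S → A → ℝ => Tmap P π δ v σ)
        {σ | ∀ j, IsPolicy (σ j)} := by
      refine LipschitzOnWith.of_dist_le_mul fun σ hσ σ' hσ' => ?_
      calc dist (Tmap P π δ v σ) (Tmap P π δ v σ') ≤ L * dist σ σ' :=
            Tmap_dist_le P π δ hP hδ hσ hσ' v
        _ = (L.toNNReal : ℝ) * dist σ σ' := by rw [Real.coe_toNNReal _ hL0]
    exact this.continuousOn
  · intro B hB
    obtain ⟨R, hR⟩ := isBounded_iff_forall_norm_le.1 hB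
    have hR0 : ∀ v ∈ B, (0:ℝ) ≤ R := fun v hv => (norm_nonneg v).trans (hR v hv)
    set L : ℝ := (Fintype.card (ι → A) : ℝ) * (Fintype.card ι : ℝ) * (‖π‖ + max R 0) with hL
    have hL0 : 0 ≤ L := by positivity
    have huec : UniformEquicontinuousOn
        (fun (v : B) (σ : ι → (ι → A) → S → A → ℝ) => Tmap P π δ v.1 σ)
        {σ | ∀ j, IsPolicy (σ j)} := by
      intro U hU
      rw [Metric.mem_uniformity_dist] at hU
      obtain ⟨ε, hε, hεU⟩ := hU
      have hmem : {xy : (ι → (ι → A) → S → A → ℝ) × (ι → (ι → A) → S → A → ℝ) |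
            dist xy.1 xy.2 < ε / (L + 1)} ∩
            ({σ | ∀ j, IsPolicy (σ j)} ×ˢ {σ | ∀ j, IsPolicy (σ j)}) ∈
          (uniformity _) ⊓ Filter.principal _ :=
        Filter.inter_mem_inf (Metric.dist_mem_uniformity (by positivity))
          (Filter.mem_principal_self _)
      refine Filter.mem_of_superset hmem ?_
      rintro ⟨σ, σ'⟩ ⟨hd, hσ, hσ'⟩ v
      refine hεU ?_
      calc dist (Tmap P π δ v.1 σ) (Tmap P π δ v.1 σ')
          ≤ (Fintype.card (ι → A) : ℝ) * (Fintype.card ι : ℝ) * (‖π‖ + ‖v.1‖) * dist σ σ' :=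
            Tmap_dist_le P π δ hP hδ hσ hσ' v.1
        _ ≤ L * dist σ σ' := by
            refine mul_le_mul_of_nonneg_right ?_ dist_nonneg
            refine mul_le_mul_of_nonneg_left ?_ (by positivity)
            exact add_le_add le_rfl (le_max_of_le_left (hR v.1 v.2))
        _ ≤ (L + 1) * dist σ σ' := by
            refine mul_le_mul_of_nonneg_right (by linarith) dist_nonneg
        _ < (L + 1) * (ε / (L + 1)) := by
            refine mul_lt_mul_of_pos_left hd (by linarith)
        _ = ε := by field_simp
    exact huec.equicontinuousOn
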